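/- Let P be an integral GT pattern with bounding sequence λ of positive length. Let j₀ = min{j ≥ 2 : λ^j_i ≠ λ^{j-1}_i for some i} and i₀ = min{i : λ^{j₀}_i ≠ λ^{j₀-1}_i}. Then the array P̃ obtained from P by replacing λ^j_{i₀} by λ^j_{i₀} + 1 for all i₀ ≤ j < j₀ is again an integral GT pattern with bounding sequence λ, satisfies P̃ ≥ P in row-wise dominance order, and length(P̃) = length(P) − 1. -/
import Mathlib


/-- A Gelfand–Tsetlin pattern for `sl_{r+1}`: rows are indexed `1,…,r+1`,
row `j` has entries `P j 1 ≥ … ≥ P j j`, with the interlacing condition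
`P j i ≥ P (j-1) i ≥ P j (i+1)` for `1 ≤ i < j ≤ r+1`. -/
def IsGTPattern (r : ℕ) (P : ℕ → ℕ → ℤ) : Prop :=
  ∀ i j, 1 ≤ i → i < j → j ≤ r + 1 → P (j-1) i ≤ P j i ∧ P j (i+1) ≤ P (j-1) i

/-- The bounding sequence (last row) of the pattern is `lam`. -/
def Bounded (r : ℕ) (P : ℕ → ℕ → ℤ) (lam : ℕ → ℤ) : Prop :=
  ∀ i, 1 ≤ i → i ≤ r + 1 → P (r+1) i = lam i

/-- Row-wise dominance: `Dom r P' P` means the partial row sums of `P'`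
dominate those of `P` in every row. -/
def Dom (r : ℕ) (P' P : ℕ → ℕ → ℤ) : Prop :=
  ∀ j i, 1 ≤ i → i ≤ j → j ≤ r + 1 →
    ∑ s ∈ Finset.Icc 1 i, P j s ≤ ∑ s ∈ Finset.Icc 1 i, P' j s

/-- The `k`-th coordinate of the weight of a pattern: difference of row sums. -/
def wt (P : ℕ → ℕ → ℤ) (k : ℕ) : ℤ :=
  (∑ i ∈ Finset.Icc 1 k, P k i) - ∑ i ∈ Finset.Icc 1 (k-1), P (k-1) i

/-- The length of a pattern. -/
def lengthP (r : ℕ) (P : ℕ → ℕ → ℤ) : ℤ :=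
  ∑ j ∈ Finset.Icc 2 (r+1), ∑ i ∈ Finset.Icc 1 (j-1), (P j i - P (j-1) i)

/-- The array Pt obtained from a positive-length pattern P by adding 1 to the
entry in position i₀ of each of the rows i₀, …, j₀-1 is again an integral GT
pattern with the same bounding sequence, dominates P row-wise, and has length
one less than that of P. -/
theorem tilde_pattern (r : ℕ) (lam : ℕ → ℤ) (P Pt : ℕ → ℕ → ℤ) (i₀ j₀ : ℕ)
    (hP : IsGTPattern r P) (hb : Bounded r P lam)
    (hlen : 0 < lengthP r P)
    (hj₀2 : 2 ≤ j₀) (hj₀r : j₀ ≤ r + 1)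
    (hj₀d : ∃ i, 1 ≤ i ∧ i < j₀ ∧ P j₀ i ≠ P (j₀-1) i)
    (hjmin : ∀ j, 2 ≤ j → j < j₀ → ∀ i, 1 ≤ i → i < j → P j i = P (j-1) i)
    (hi₀1 : 1 ≤ i₀) (hi₀j : i₀ < j₀) (hi₀d : P j₀ i₀ ≠ P (j₀-1) i₀)
    (himin : ∀ i, 1 ≤ i → i < i₀ → P j₀ i = P (j₀-1) i)
    (hPt : ∀ j i, Pt j i = if i = i₀ ∧ i₀ ≤ j ∧ j < j₀ then P j i + 1 else P j i) :
    IsGTPattern r Pt ∧ Bounded r Pt lam ∧ Dom r Pt P ∧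
      lengthP r Pt = lengthP r P - 1 := by
  -- strictness at (i₀, j₀)
  have hstrict : P (j₀-1) i₀ + 1 ≤ P j₀ i₀ := by
    have h := (hP i₀ j₀ hi₀1 hi₀j hj₀r).1
    omega
  -- chain: column i is constant on rows i, …, j₀-1
  have chain : ∀ i, 1 ≤ i → ∀ j, i ≤ j → j < j₀ → P j i = P i i := by
    intro i hi j
    induction j with
    | zero => omega
    | succ j ih =>
      intro hij hjlt
      rcases Nat.eq_or_lt_of_le hij with h | h
      · rw [h]
      · have hij' : i ≤ j := by omega
        have := hjmin (j+1) (by omega) hjlt i hi (by omega)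
        simpa [this] using ih hij' (by omega)
  have chain2 : ∀ i, 1 ≤ i → ∀ j, i ≤ j → j < j₀ → P j i = P (j₀-1) i := by
    intro i hi j hij hjlt
    rw [chain i hi j hij hjlt, chain i hi (j₀-1) (by omega) (by omega)]
  refine ⟨?_, ?_, ?_, ?_⟩
  · -- GT pattern
    intro i j hi hij hjr
    have hPij := hP i j hi hij hjr
    constructor
    · rw [hPt, hPt]
      split_ifs with h1 h2 h2
      · linarith [hPij.1]
      · -- (j-1,i) modified, (j,i) not: then j = j₀, i = i₀
        have hj : j = j₀ := by omega
        have hieq : i = i₀ := h1.1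
        rw [hj, hieq]; exact hstrict
      · exfalso; omega
      · exact hPij.1
    · rw [hPt, hPt]
      split_ifs with h1 h2 h2
      · exfalso; omega
      · -- (j, i+1) modified, i+1 = i₀, i₀ ≤ j < j₀
        have hieq : i + 1 = i₀ := h1.1
        have hi2 : 2 ≤ i₀ := by omega
        have e1 : P j (i+1) = P (j₀-1) i₀ := by
          rw [hieq]; exact chain2 i₀ hi₀1 j (by omega) h1.2.2
        have e2 : P (j-1) i = P (j₀-1) i := by
          exact chain2 i hi (j-1) (by omega) (by omega)
        have e3 : P j₀ i₀ ≤ P (j₀-1) i := by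
          have := (hP i j₀ hi (by omega) hj₀r).2
          rwa [hieq] at this
        rw [e1, e2]; linarith
      · -- (j-1, i) modified, (j, i+1) not
        linarith [hPij.2]
      · exact hPij.2
  · -- Bounded
    intro i hi hir
    rw [hPt, if_neg (by omega), hb i hi hir]
  · -- Dom
    intro j i h1 h2 h3
    apply Finset.sum_le_sum
    intro s _
    rw [hPt]
    split_ifs
    · linarith
    · exact le_rfl
  · -- length
    set E : ℕ → ℕ → ℤ := fun j i => if i = i₀ ∧ i₀ ≤ j ∧ j < j₀ then 1 else 0 with hE
    have hPtE : ∀ j i, Pt j i = P j i + E j i := by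
      intro j i
      rw [hPt]
      simp only [hE]
      split_ifs <;> ring
    have hsumE : ∀ (c : Prop) [Decidable c] (n : ℕ),
        ∑ i ∈ Finset.Icc 1 n, (if i = i₀ ∧ c then (1:ℤ) else 0)
          = if i₀ ≤ n ∧ c then 1 else 0 := by
      intro c _ n
      by_cases hc : c
      · simp only [hc, and_true]
        rw [Finset.sum_ite_eq' (Finset.Icc 1 n) i₀ (fun _ => (1:ℤ))]
        simp [Finset.mem_Icc, hi₀1]
      · simp [hc]
    have key : ∑ j ∈ Finset.Icc 2 (r+1), ∑ i ∈ Finset.Icc 1 (j-1),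
        (E j i - E (j-1) i) = -1 := by
      have hterm : ∀ j ∈ Finset.Icc 2 (r+1),
          ∑ i ∈ Finset.Icc 1 (j-1), (E j i - E (j-1) i)
            = if j = j₀ then (-1 : ℤ) else 0 := by
        intro j hj
        rw [Finset.mem_Icc] at hj
        rw [Finset.sum_sub_distrib, hE]
        simp only []
        rw [hsumE (i₀ ≤ j ∧ j < j₀) (j-1), hsumE (i₀ ≤ j-1 ∧ j-1 < j₀) (j-1)]
        have h2 : 2 ≤ j := hj.1
        by_cases hjj : j = j₀
        · rw [if_neg (by omega), if_pos (by omega), if_pos hjj]; ring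
        · rw [if_neg hjj]
          by_cases hlt : i₀ < j ∧ j < j₀
          · rw [if_pos (by omega), if_pos (by omega)]; ring
          · rw [if_neg (by omega), if_neg (by omega)]; ring
      rw [Finset.sum_congr rfl hterm, Finset.sum_ite_eq' (Finset.Icc 2 (r+1)) j₀
        (fun _ => (-1:ℤ))]
      simp [Finset.mem_Icc, hj₀2, hj₀r]
    have expand : lengthP r Pt = lengthP r P
        + ∑ j ∈ Finset.Icc 2 (r+1), ∑ i ∈ Finset.Icc 1 (j-1),
            (E j i - E (j-1) i) := by
      unfold lengthP
      rw [← Finset.sum_add_distrib]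
      apply Finset.sum_congr rfl
      intro j _
      rw [← Finset.sum_add_distrib]
      apply Finset.sum_congr rfl
      intro i _
      rw [hPtE, hPtE]
      ring
    rw [expand, key]
    ring
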